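/- Let T > 0, σ > 0 and x₀ ∈ (0, 1). Let (Ω, F, P) be a probability space carrying a standard Brownian motion W : [0,T] × Ω → ℝ with continuous sample paths. For each N ∈ ℕ (N ≥ 1) define the Euler approximation Y^N_0 := x₀ and Y^N_{k+1} := Y^N_k + σ·Y^N_k·(1 − Y^N_k)·(W_{(k+1)T/N} − W_{kT/N}) for k = 0, 1, …, N−1. Then lim_{N → ∞} E[|Y^N_N|^p] = ∞ for every p ∈ [1, ∞). -/

import Mathlib

open MeasureTheory ProbabilityTheory Filter Real
open scoped NNReal ENNReal

namespace SB19

/-- Lower bound for upper tail of centered Gaussian. -/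
lemma gauss_tail {v : ℝ≥0} (hv : v ≠ 0) {a : ℝ} (ha : 0 ≤ a) :
    ENNReal.ofReal (Real.sqrt v * gaussianPDFReal 0 v (a + Real.sqrt v))
      ≤ gaussianReal 0 v (Set.Ici a) := by
  have hsv : (0:ℝ) < Real.sqrt v := Real.sqrt_pos.mpr (by exact_mod_cast pos_iff_ne_zero.mpr hv)
  have hsub : Set.Icc a (a + Real.sqrt v) ⊆ Set.Ici a := Set.Icc_subset_Ici_self
  refine le_trans ?_ (measure_mono hsub)
  rw [gaussianReal_apply 0 hv]
  have hpt : ∀ x ∈ Set.Icc a (a + Real.sqrt v),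
      ENNReal.ofReal (gaussianPDFReal 0 v (a + Real.sqrt v)) ≤ gaussianPDF 0 v x := by
    intro x hx
    unfold gaussianPDF
    apply ENNReal.ofReal_le_ofReal
    unfold gaussianPDFReal
    apply mul_le_mul_of_nonneg_left _ (by positivity)
    apply Real.exp_le_exp.mpr
    have hx0 : 0 ≤ x := le_trans ha hx.1
    have : x ^ 2 ≤ (a + Real.sqrt v) ^ 2 := by nlinarith [hx.2, hx.1]
    have hv0 : (0:ℝ) < 2 * v := by positivity
    rw [div_le_div_iff₀ hv0 hv0]
    nlinarith
  calc ENNReal.ofReal (Real.sqrt v * gaussianPDFReal 0 v (a + Real.sqrt v))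
      = ENNReal.ofReal (gaussianPDFReal 0 v (a + Real.sqrt v)) * volume (Set.Icc a (a + Real.sqrt v)) := by
        rw [Real.volume_Icc, add_sub_cancel_left,
          ← ENNReal.ofReal_mul (gaussianPDFReal_nonneg 0 v _), mul_comm]
    _ = ∫⁻ _ in Set.Icc a (a + Real.sqrt v), ENNReal.ofReal (gaussianPDFReal 0 v (a + Real.sqrt v)) := by
        rw [setLIntegral_const]
    _ ≤ ∫⁻ x in Set.Icc a (a + Real.sqrt v), gaussianPDF 0 v x := by
        apply setLIntegral_mono (measurable_gaussianPDF 0 v)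
        exact hpt

lemma sqrt_mul_pdf {v : ℝ≥0} (hv : v ≠ 0) (x : ℝ) :
    Real.sqrt v * gaussianPDFReal 0 v x = Real.exp (-x^2 / (2*v)) / Real.sqrt (2*Real.pi) := by
  have hvpos : (0:ℝ) < v := by exact_mod_cast pos_iff_ne_zero.mpr hv
  unfold gaussianPDFReal
  rw [show (2 * Real.pi * (v:ℝ)) = (2*Real.pi) * v by ring,
    Real.sqrt_mul (by positivity) (v:ℝ), mul_inv]
  have hsv : Real.sqrt v ≠ 0 := by positivity
  field_simp
  ring_nf

lemma sqrt_two_pi_le : Real.sqrt (2*Real.pi) ≤ 3 := by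
  rw [show (3:ℝ) = Real.sqrt 9 by rw [show (9:ℝ) = 3^2 by norm_num, Real.sqrt_sq]; norm_num]
  apply Real.sqrt_le_sqrt
  nlinarith [Real.pi_le_four]

/-- Even moment lower bound for centered Gaussian. -/
lemma gauss_even_moment {v : ℝ≥0} (hv : v ≠ 0) {q : ℕ} (hq : 1 ≤ q) :
    ENNReal.ofReal (((q:ℝ) * v / 60) ^ q)
      ≤ ∫⁻ x, ENNReal.ofReal (x ^ (2*q)) ∂(gaussianReal 0 v) := by
  have hvpos : (0:ℝ) < v := by exact_mod_cast pos_iff_ne_zero.mpr hv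
  have hqpos : (0:ℝ) < q := by exact_mod_cast hq
  set s : ℝ := Real.sqrt (q * v) with hs_def
  have hs0 : 0 ≤ s := Real.sqrt_nonneg _
  have hss : s^2 = q * v := Real.sq_sqrt (by positivity)
  -- pointwise bound on Ici s
  have hpt : ∀ x ∈ Set.Ici s, ENNReal.ofReal (((q:ℝ)*v)^q) ≤ ENNReal.ofReal (x ^ (2*q)) := by
    intro x hx
    apply ENNReal.ofReal_le_ofReal
    have hx0 : 0 ≤ x := le_trans hs0 hx
    have : (q:ℝ)*v ≤ x^2 := by nlinarith [Set.mem_Ici.mp hx]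
    calc ((q:ℝ)*v)^q ≤ (x^2)^q := pow_le_pow_left₀ (by positivity) this q
      _ = x^(2*q) := by rw [← pow_mul]
  have h1 : ENNReal.ofReal (((q:ℝ)*v)^q) * gaussianReal 0 v (Set.Ici s)
      ≤ ∫⁻ x, ENNReal.ofReal (x ^ (2*q)) ∂(gaussianReal 0 v) := by
    calc ENNReal.ofReal (((q:ℝ)*v)^q) * gaussianReal 0 v (Set.Ici s)
        = ∫⁻ _ in Set.Ici s, ENNReal.ofReal (((q:ℝ)*v)^q) ∂(gaussianReal 0 v) := by
          rw [setLIntegral_const]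
      _ ≤ ∫⁻ x in Set.Ici s, ENNReal.ofReal (x ^ (2*q)) ∂(gaussianReal 0 v) :=
          setLIntegral_mono (by measurability) hpt
      _ ≤ ∫⁻ x, ENNReal.ofReal (x ^ (2*q)) ∂(gaussianReal 0 v) :=
          setLIntegral_le_lintegral _ _
  refine le_trans ?_ h1
  have htail := gauss_tail hv hs0
  have hpdf : Real.exp (-(((q:ℝ))+1)) / Real.sqrt (2*Real.pi)
      ≤ Real.sqrt v * gaussianPDFReal 0 v (s + Real.sqrt v) := by
    rw [sqrt_mul_pdf hv]
    gcongr
    have hsv : s * Real.sqrt v = Real.sqrt q * v := by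
      rw [hs_def, Real.sqrt_mul (by positivity)]
      rw [mul_assoc, Real.mul_self_sqrt (by positivity)]
    have h2q : 2 * Real.sqrt (q:ℝ) ≤ (q:ℝ) + 1 := by
      nlinarith [sq_nonneg (Real.sqrt (q:ℝ) - 1), Real.sq_sqrt hqpos.le]
    have hvv : Real.sqrt v * Real.sqrt v = (v:ℝ) := Real.mul_self_sqrt hvpos.le
    rw [neg_div, neg_le_neg_iff, div_le_iff₀ (by positivity)]
    nlinarith [Real.sqrt_nonneg (q:ℝ)]
  have hγ : ENNReal.ofReal (Real.exp (-((q:ℝ)+1)) / Real.sqrt (2*Real.pi))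
      ≤ gaussianReal 0 v (Set.Ici s) :=
    le_trans (ENNReal.ofReal_le_ofReal hpdf) htail
  calc ENNReal.ofReal (((q:ℝ) * v / 60) ^ q)
      ≤ ENNReal.ofReal (((q:ℝ)*v)^q * (Real.exp (-((q:ℝ)+1)) / Real.sqrt (2*Real.pi))) := by
        apply ENNReal.ofReal_le_ofReal
        rw [div_pow]
        rw [div_le_iff₀ (by positivity)]
        rw [show ((q:ℝ)*v)^q * (Real.exp (-((q:ℝ)+1)) / Real.sqrt (2*Real.pi)) * 60^q
          = ((q:ℝ)*v)^q * ((Real.exp (-((q:ℝ)+1)) / Real.sqrt (2*Real.pi)) * 60^q) by ring]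
        apply le_mul_of_one_le_right (by positivity)
        rw [Real.exp_neg, div_mul_eq_mul_div, le_div_iff₀ (by positivity), one_mul,
          inv_mul_eq_div, le_div_iff₀ (Real.exp_pos _)]
        have hE : Real.exp ((q:ℝ)+1) ≤ 3^(q+1) := by
          have : ((q:ℝ)+1) = ((q+1 : ℕ):ℝ) := by push_cast; ring
          rw [this, ← Real.exp_one_pow]
          exact pow_le_pow_left₀ (Real.exp_pos 1).le
            (le_trans Real.exp_one_lt_d9.le (by norm_num)) _
        calc Real.sqrt (2*Real.pi) * Real.exp ((q:ℝ)+1) ≤ 3 * 3^(q+1) := by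
              apply mul_le_mul sqrt_two_pi_le hE (Real.exp_pos _).le (by norm_num)
          _ = 9 * 3^q := by ring
          _ ≤ 20^q * 3^q := by
              have : (20:ℝ) ≤ 20^q := le_self_pow₀ (by norm_num) (by omega)
              nlinarith [pow_pos (show (0:ℝ)<3 by norm_num) q]
          _ = 60^q := by rw [← mul_pow]; norm_num
    _ ≤ ENNReal.ofReal (((q:ℝ)*v)^q) * gaussianReal 0 v (Set.Ici s) := by
        rw [ENNReal.ofReal_mul (by positivity)]
        exact mul_le_mul_right hγ _


lemma meas_abs_rpow {p : ℝ} (hp : 0 ≤ p) :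
    Measurable (fun x : ℝ => ENNReal.ofReal (|x| ^ p)) :=
  ((Real.continuous_rpow_const hp).measurable.comp measurable_abs).ennreal_ofReal

/-- rpow absolute moment lower bound for centered Gaussian. -/
lemma gauss_abs_moment {v : ℝ≥0} (hv : v ≠ 0) {p : ℝ} (hp : 0 ≤ p) :
    ENNReal.ofReal (Real.sqrt v ^ p / 60)
      ≤ ∫⁻ x, ENNReal.ofReal (|x| ^ p) ∂(gaussianReal 0 v) := by
  have hvpos : (0:ℝ) < v := by exact_mod_cast pos_iff_ne_zero.mpr hv
  set s : ℝ := Real.sqrt v with hs_def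
  have hs0 : 0 ≤ s := Real.sqrt_nonneg _
  have hpt : ∀ x ∈ Set.Ici s, ENNReal.ofReal (s ^ p) ≤ ENNReal.ofReal (|x| ^ p) := by
    intro x hx
    apply ENNReal.ofReal_le_ofReal
    have hx' : s ≤ x := hx
    rw [abs_of_nonneg (le_trans hs0 hx')]
    exact Real.rpow_le_rpow hs0 hx' hp
  have h1 : ENNReal.ofReal (s ^ p) * gaussianReal 0 v (Set.Ici s)
      ≤ ∫⁻ x, ENNReal.ofReal (|x| ^ p) ∂(gaussianReal 0 v) := by
    calc ENNReal.ofReal (s ^ p) * gaussianReal 0 v (Set.Ici s)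
        = ∫⁻ _ in Set.Ici s, ENNReal.ofReal (s ^ p) ∂(gaussianReal 0 v) := by
          rw [setLIntegral_const]
      _ ≤ ∫⁻ x in Set.Ici s, ENNReal.ofReal (|x| ^ p) ∂(gaussianReal 0 v) :=
          setLIntegral_mono (meas_abs_rpow hp) hpt
      _ ≤ _ := setLIntegral_le_lintegral _ _
  refine le_trans ?_ h1
  have hpdf : (1:ℝ)/60 ≤ Real.sqrt v * gaussianPDFReal 0 v (s + Real.sqrt v) := by
    rw [sqrt_mul_pdf hv]
    have hsq : (s + Real.sqrt v)^2 = 4 * v := by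
      rw [← hs_def]
      have := Real.mul_self_sqrt hvpos.le
      nlinarith
    rw [hsq, show -(4*(v:ℝ)) / (2*v) = -2 by field_simp; ring]
    have hE : Real.exp 2 ≤ 9 := by
      rw [show (2:ℝ) = ((2:ℕ):ℝ) by norm_num, ← Real.exp_one_pow]
      nlinarith [le_trans Real.exp_one_lt_d9.le (show (2.7182818286:ℝ) ≤ 3 by norm_num),
        (Real.exp_pos 1).le]
    have hEinv : (1:ℝ)/9 ≤ Real.exp (-2) := by
      rw [Real.exp_neg]
      rw [div_le_iff₀ (by norm_num), inv_mul_eq_div, le_div_iff₀ (Real.exp_pos _), one_mul]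
      linarith
    rw [div_le_div_iff₀ (by norm_num) (by positivity)]
    nlinarith [sqrt_two_pi_le, Real.sqrt_nonneg (2*Real.pi)]
  have hγ : ENNReal.ofReal ((1:ℝ)/60) ≤ gaussianReal 0 v (Set.Ici s) :=
    le_trans (ENNReal.ofReal_le_ofReal hpdf) (gauss_tail hv hs0)
  calc ENNReal.ofReal (s ^ p / 60)
      = ENNReal.ofReal (s ^ p) * ENNReal.ofReal ((1:ℝ)/60) := by
        rw [← ENNReal.ofReal_mul (by positivity)]
        ring_nf
    _ ≤ ENNReal.ofReal (s ^ p) * gaussianReal 0 v (Set.Ici s) := mul_le_mul_right hγ _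


lemma gauss_symm (v : ℝ≥0) {G : ℝ → ℝ≥0∞} (hG : Measurable G) :
    ∫⁻ x, G (-x) ∂(gaussianReal 0 v) = ∫⁻ x, G x ∂(gaussianReal 0 v) := by
  have hmap : (gaussianReal 0 v).map (fun x => -x) = gaussianReal 0 v := by
    have h := gaussianReal_map_const_mul (μ := 0) (v := v) (-1)
    have h1 : NNReal.mk ((-1:ℝ)^2) (sq_nonneg _) = 1 := by ext; norm_num
    rw [h1, one_mul, mul_zero] at h
    rw [← h]
    congr 1
    funext x
    ring
  conv_rhs => rw [← hmap, lintegral_map hG measurable_neg]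

lemma g_sum_ineq {g : ℝ → ℝ} (hnn : ∀ x, 0 ≤ g x) (heven : ∀ x, g (-x) = g x)
    (hmono : ∀ a b : ℝ, 0 ≤ a → a ≤ b → g a ≤ g b) (u w : ℝ) :
    g ((u - w)/2) ≤ g u + g w := by
  have habs : ∀ x, g |x| = g x := by
    intro x
    rcases abs_cases x with ⟨h,_⟩|⟨h,_⟩
    · rw [h]
    · rw [h, heven]
  have h1 : |(u-w)/2| ≤ max |u| |w| := by
    have h2 := abs_sub u w
    rw [abs_div, abs_two]
    rcases max_cases |u| |w| with ⟨h,h'⟩|⟨h,h'⟩ <;> rw [h] <;> linarith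
  calc g ((u-w)/2) = g |(u-w)/2| := (habs _).symm
    _ ≤ g (max |u| |w|) := hmono _ _ (abs_nonneg _) h1
    _ ≤ g u + g w := by
        rcases max_cases |u| |w| with ⟨h,_⟩|⟨h,_⟩ <;> rw [h, habs]
        · linarith [hnn w]
        · linarith [hnn u]

/-- Core step inequality for the Euler scheme. -/
lemma step_core {Ω : Type*} [MeasurableSpace Ω] (P : Measure Ω) [IsProbabilityMeasure P]
    (X D : Ω → ℝ) (σ : ℝ) (v : ℝ≥0)
    (hX : Measurable X) (hD : Measurable D)
    (hlaw : P.map D = gaussianReal 0 v)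
    (hind : IndepFun X D P)
    {g : ℝ → ℝ} (hgm : Measurable g) (hnn : ∀ x, 0 ≤ g x) (heven : ∀ x, g (-x) = g x)
    (hmono : ∀ a b : ℝ, 0 ≤ a → a ≤ b → g a ≤ g b) (hmul : ∀ a b, g (a*b) = g a * g b) :
    (∫⁻ ω, ENNReal.ofReal (g (σ * X ω * (1 - X ω))) ∂P)
        * (∫⁻ x, ENNReal.ofReal (g x) ∂(gaussianReal 0 v))
      ≤ 2 * ∫⁻ ω, ENNReal.ofReal (g (X ω + σ * X ω * (1 - X ω) * D ω)) ∂P := by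
  set γ := gaussianReal 0 v with hγ
  set μ := P.map X with hμ
  have : IsProbabilityMeasure μ := Measure.isProbabilityMeasure_map hX.aemeasurable
  have hpair : P.map (fun ω => (X ω, D ω)) = μ.prod γ := by
    have h := (indepFun_iff_map_prod_eq_prod_map_map hX.aemeasurable hD.aemeasurable).mp hind
    rw [hlaw] at h
    exact h
  set b : ℝ → ℝ := fun y => σ * y * (1 - y) with hb_def
  have hb : Measurable b := by
    apply Measurable.mul
    · exact measurable_const.mul measurable_id
    · exact measurable_const.sub measurable_id
  set F : ℝ × ℝ → ℝ≥0∞ := fun z => ENNReal.ofReal (g (z.1 + b z.1 * z.2)) with hF_def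
  have hF : Measurable F := by
    apply Measurable.ennreal_ofReal
    apply hgm.comp
    exact measurable_fst.add ((hb.comp measurable_fst).mul measurable_snd)
  set M : ℝ≥0∞ := ∫⁻ x, ENNReal.ofReal (g x) ∂γ with hM
  have hgE : Measurable (fun x : ℝ => ENNReal.ofReal (g x)) := hgm.ennreal_ofReal
  have hA : ∫⁻ ω, ENNReal.ofReal (g (X ω + σ * X ω * (1 - X ω) * D ω)) ∂P
      = ∫⁻ y, ∫⁻ x, F (y, x) ∂γ ∂μ := by
    have h1 : ∫⁻ ω, ENNReal.ofReal (g (X ω + σ * X ω * (1 - X ω) * D ω)) ∂P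
        = ∫⁻ ω, F (X ω, D ω) ∂P := rfl
    rw [h1, ← lintegral_map hF (hX.prodMk hD), hpair, lintegral_prod F hF.aemeasurable]
  have hinner : ∀ y : ℝ, ENNReal.ofReal (g (b y)) * M ≤ 2 * ∫⁻ x, F (y, x) ∂γ := by
    intro y
    have hsym : ∫⁻ x, F (y, x) ∂γ = ∫⁻ x, F (y, -x) ∂γ := by
      rw [hγ]
      exact (gauss_symm v (hF.comp (measurable_const.prodMk measurable_id))).symm
    have hlow : ENNReal.ofReal (g (b y)) * M ≤ ∫⁻ x, (F (y, x) + F (y, -x)) ∂γ := by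
      have heq : ∀ x : ℝ, ENNReal.ofReal (g (b y * x)) ≤ F (y, x) + F (y, -x) := by
        intro x
        have hu : b y * x = ((y + b y * x) - (y + b y * (-x)))/2 := by ring
        have := g_sum_ineq hnn heven hmono (y + b y * x) (y + b y * (-x))
        rw [← hu] at this
        calc ENNReal.ofReal (g (b y * x))
            ≤ ENNReal.ofReal (g (y + b y * x) + g (y + b y * (-x))) :=
              ENNReal.ofReal_le_ofReal this
          _ = F (y, x) + F (y, -x) := ENNReal.ofReal_add (hnn _) (hnn _)
      calc ENNReal.ofReal (g (b y)) * M
          = ∫⁻ x, ENNReal.ofReal (g (b y)) * ENNReal.ofReal (g x) ∂γ := by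
            rw [lintegral_const_mul _ hgE]
        _ = ∫⁻ x, ENNReal.ofReal (g (b y * x)) ∂γ := by
            congr 1
            funext x
            rw [hmul (b y) x, ENNReal.ofReal_mul (hnn _)]
        _ ≤ ∫⁻ x, (F (y, x) + F (y, -x)) ∂γ := lintegral_mono heq
    have hFy : Measurable (fun x : ℝ => F (y, x)) :=
      hF.comp (measurable_const.prodMk measurable_id)
    rw [lintegral_add_left hFy, ← hsym, ← two_mul] at hlow
    exact hlow
  calc (∫⁻ ω, ENNReal.ofReal (g (σ * X ω * (1 - X ω))) ∂P) * M
      = (∫⁻ y, ENNReal.ofReal (g (b y)) ∂μ) * M := by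
        congr 1
        exact (lintegral_map (f := fun y => ENNReal.ofReal (g (b y)))
          (hgm.comp hb).ennreal_ofReal hX).symm
    _ = ∫⁻ y, ENNReal.ofReal (g (b y)) * M ∂μ := (lintegral_mul_const _ ((hgm.comp hb).ennreal_ofReal)).symm
    _ ≤ ∫⁻ y, 2 * ∫⁻ x, F (y, x) ∂γ ∂μ := lintegral_mono hinner
    _ = 2 * ∫⁻ y, ∫⁻ x, F (y, x) ∂γ ∂μ := lintegral_const_mul 2 (hF.lintegral_prod_right')
    _ = 2 * ∫⁻ ω, ENNReal.ofReal (g (X ω + σ * X ω * (1 - X ω) * D ω)) ∂P := by rw [hA]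


lemma poly1 (y : ℝ) (q : ℕ) : y^(2*(2*q)) ≤ 4^q * (y*(1-y))^(2*q) + 64^q := by
  have hterm : (0:ℝ) ≤ 4^q * (y*(1-y))^(2*q) := by
    apply mul_nonneg (by positivity)
    rw [pow_mul]; positivity
  rcases le_or_gt |y| 2 with h|h
  · have h1 : y^2 ≤ 4 := by nlinarith [sq_abs y, abs_nonneg y]
    have : y^(2*(2*q)) ≤ 64^q := by
      calc y^(2*(2*q)) = (y^2)^(2*q) := by rw [← pow_mul]
        _ ≤ 4^(2*q) := pow_le_pow_left₀ (sq_nonneg y) h1 _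
        _ = 16^q := by rw [pow_mul]; norm_num
        _ ≤ 64^q := pow_le_pow_left₀ (by norm_num) (by norm_num) q
    linarith
  · have h1y : |y| - 1 ≤ |1-y| := by
      rw [abs_sub_comm]
      have := abs_sub_abs_le_abs_sub y 1
      simpa using this
    have hb : (|y| - 1)^2 ≤ |1-y|^2 := by
      have h10 : (0:ℝ) ≤ |y| - 1 := by linarith
      exact pow_le_pow_left₀ h10 h1y 2
    have key : y^4 ≤ 4 * (y*(1-y))^2 := by
      have e0 : y^4 = (|y|^2)^2 := by rw [sq_abs]; ring
      have e1 : (y*(1-y))^2 = |y|^2*|1-y|^2 := by rw [sq_abs, sq_abs]; ring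
      rw [e0, e1]
      nlinarith [hb, h,
        mul_nonneg (mul_nonneg (sq_nonneg |y|) (show (0:ℝ) ≤ |y| - 2 by linarith))
          (show (0:ℝ) ≤ 3*|y| - 2 by linarith),
        mul_nonneg (sq_nonneg |y|) (sub_nonneg.mpr hb)]
    have : y^(2*(2*q)) ≤ 4^q * (y*(1-y))^(2*q) := by
      calc y^(2*(2*q)) = (y^4)^q := by rw [← pow_mul]; congr 1; ring
        _ ≤ (4 * (y*(1-y))^2)^q := pow_le_pow_left₀ (by positivity) key q
        _ = 4^q * (y*(1-y))^(2*q) := by rw [mul_pow, pow_mul]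
    have h64 : (0:ℝ) ≤ 64^q := by positivity
    linarith

lemma poly1σ {σ : ℝ} (hσ : 0 < σ) (y : ℝ) (q : ℕ) :
    y^(2*(2*q)) ≤ (4/σ^2)^q * (σ*y*(1-y))^(2*q) + 64^q := by
  have h : (4/σ^2)^q * (σ*y*(1-y))^(2*q) = 4^q * (y*(1-y))^(2*q) := by
    rw [show σ*y*(1-y) = σ*(y*(1-y)) by ring, mul_pow, pow_mul σ, ← mul_assoc, ← mul_pow]
    congr 2
    field_simp
  rw [h]
  exact poly1 y q

lemma poly2σ {σ : ℝ} (hσ : 0 < σ) (y : ℝ) {p : ℝ} (hp : 1 ≤ p) :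
    y^2 ≤ (2/σ)^p * |σ*y*(1-y)|^p + 8^p := by
  have hp0 : 0 ≤ p := le_trans zero_le_one hp
  have h : (2/σ)^p * |σ*y*(1-y)|^p = 2^p * |y*(1-y)|^p := by
    rw [show σ*y*(1-y) = σ*(y*(1-y)) by ring, abs_mul, abs_of_pos hσ,
      Real.mul_rpow hσ.le (abs_nonneg _), ← mul_assoc,
      ← Real.mul_rpow (by positivity) hσ.le]
    congr 2
    field_simp
  rw [h]
  have hterm : (0:ℝ) ≤ 2^p * |y*(1-y)|^p := by positivity
  rcases le_or_gt |y| 2 with hy|hy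
  · have h8 : (4:ℝ) ≤ 8^p := by
      calc (4:ℝ) ≤ 8 := by norm_num
        _ = (8:ℝ)^(1:ℝ) := (Real.rpow_one 8).symm
        _ ≤ 8^p := Real.rpow_le_rpow_of_exponent_le (by norm_num) hp
    nlinarith [sq_abs y, abs_nonneg y]
  · have h1y : |y| - 1 ≤ |1-y| := by
      rw [abs_sub_comm]
      have := abs_sub_abs_le_abs_sub y 1
      simpa using this
    have key : y^2/2 ≤ |y*(1-y)| := by
      rw [abs_mul]
      nlinarith [sq_abs y, abs_nonneg y, abs_nonneg (1-y)]
    have h2 : 2^p * |y*(1-y)|^p ≥ (y^2)^p := by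
      calc 2^p * |y*(1-y)|^p ≥ 2^p * (y^2/2)^p :=
            mul_le_mul_of_nonneg_left (Real.rpow_le_rpow (by positivity) key hp0)
              (by positivity)
        _ = (y^2)^p := by
            rw [← Real.mul_rpow (by norm_num) (by positivity)]
            congr 1
            ring
    have h3 : y^2 ≤ (y^2)^p := by
      have h1 : (1:ℝ) ≤ y^2 := by nlinarith [sq_abs y, abs_nonneg y]
      calc y^2 = (y^2)^(1:ℝ) := (Real.rpow_one _).symm
        _ ≤ (y^2)^p := Real.rpow_le_rpow_of_exponent_le h1 hp
    have h8 : (0:ℝ) ≤ 8^p := by positivity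
    linarith

end SB19

/-- `W` is a standard Brownian motion on the time interval `[0, T]` with
continuous sample paths: each `W t` is measurable, `W 0 = 0`, the sample paths
are continuous on `[0, T]`, the increment `W t - W s` is centered Gaussian with
variance `t - s` for `0 ≤ s ≤ t ≤ T`, and increments over disjoint consecutive
time intervals are independent. -/
def IsStandardBrownianMotion {Ω : Type*} [MeasurableSpace Ω] (P : Measure Ω)
    (T : ℝ) (W : ℝ → Ω → ℝ) : Prop :=
  (∀ t, t ∈ Set.Icc 0 T → Measurable (W t)) ∧
  (∀ ω, W 0 ω = 0) ∧
  (∀ ω, ContinuousOn (fun t => W t ω) (Set.Icc 0 T)) ∧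
  (∀ s t : ℝ, 0 ≤ s → s ≤ t → t ≤ T →
    Measure.map (fun ω => W t ω - W s ω) P = gaussianReal 0 (Real.toNNReal (t - s))) ∧
  (∀ (n : ℕ) (t : Fin (n + 1) → ℝ), Monotone t → (∀ i, t i ∈ Set.Icc 0 T) →
    iIndepFun
      (fun (i : Fin n) => fun ω => W (t i.succ) ω - W (t i.castSucc) ω) P)

namespace SB19

set_option maxHeartbeats 2000000 in
lemma key {Ω : Type*} [MeasurableSpace Ω] (P : Measure Ω) [IsProbabilityMeasure P]
    (T : ℝ) (hT : 0 < T) (σ : ℝ) (hσ : 0 < σ) (x₀ : ℝ) (hx₀ : x₀ ∈ Set.Ioo (0:ℝ) 1)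
    (W : ℝ → Ω → ℝ) (hW : IsStandardBrownianMotion P T W)
    (Y : ℕ → ℕ → Ω → ℝ)
    (hY0 : ∀ N, 1 ≤ N → ∀ ω, Y N 0 ω = x₀)
    (hYrec : ∀ N, 1 ≤ N → ∀ k < N, ∀ ω,
      Y N (k + 1) ω = Y N k ω + σ * Y N k ω * (1 - Y N k ω) * (W (((k : ℝ) + 1) * T / N) ω - W ((k : ℝ) * T / N) ω))
    (p : ℝ) (hp : 1 ≤ p) (N : ℕ) (hN : 16 ≤ N) (ρ : ℝ)
    (hρ1 : 960 * N / (σ^2 * T) ≤ ρ) (hρ2 : 12 ≤ ρ)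
    (hbase : 2 * ρ ≤ (σ * (x₀ * (1 - x₀)))^2 * (2^(N-2) * (T/N)) / 60)
    (htop : 2 * (8:ℝ)^p ≤ ρ) :
    ENNReal.ofReal (σ^p * ρ * Real.sqrt (T/N) ^ p / (240 * 2^p))
      ≤ ∫⁻ ω, ENNReal.ofReal (|Y N N ω| ^ p) ∂P := by
  have hN1 : 1 ≤ N := le_trans (by norm_num) hN
  have hNpos : (0:ℝ) < N := by exact_mod_cast lt_of_lt_of_le (by norm_num) hN
  have hTN : (0:ℝ) < T / N := div_pos hT hNpos
  set v : ℝ≥0 := Real.toNNReal (T/N) with hv_def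
  have hvR : (v:ℝ) = T/N := Real.coe_toNNReal _ hTN.le
  have hv : v ≠ 0 := by
    intro h
    rw [← NNReal.coe_eq_zero.mpr h] at hTN
    rw [hvR] at hTN
    exact lt_irrefl _ hTN
  set D : ℕ → Ω → ℝ := fun k ω => W (((k:ℝ)+1)*T/N) ω - W ((k:ℝ)*T/N) ω with hD_def
  have htime : ∀ k : ℕ, k ≤ N → (k:ℝ)*T/N ∈ Set.Icc (0:ℝ) T := by
    intro k hk
    constructor
    · positivity
    · rw [div_le_iff₀ hNpos]
      have : (k:ℝ) ≤ N := by exact_mod_cast hk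
      nlinarith
  have htime' : ∀ k : ℕ, k < N → ((k:ℝ)+1)*T/N ∈ Set.Icc (0:ℝ) T := by
    intro k hk
    have := htime (k+1) hk
    push_cast at this
    exact this
  have hDmeas : ∀ k, k < N → Measurable (D k) := by
    intro k hk
    exact (hW.1 _ (htime' k hk)).sub (hW.1 _ (htime k hk.le))
  have hDlaw : ∀ k, k < N → P.map (D k) = gaussianReal 0 v := by
    intro k hk
    have h0 : (0:ℝ) ≤ (k:ℝ)*T/N := by positivity
    have hle : (k:ℝ)*T/N ≤ ((k:ℝ)+1)*T/N := by
      apply div_le_div_of_nonneg_right _ hNpos.le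
      nlinarith
    have hTle : ((k:ℝ)+1)*T/N ≤ T := (htime' k hk).2
    have h := hW.2.2.2.1 ((k:ℝ)*T/N) (((k:ℝ)+1)*T/N) h0 hle hTle
    rw [show ((k:ℝ)+1)*T/N - (k:ℝ)*T/N = T/N by ring] at h
    exact h
  have hiid : iIndepFun (fun i : Fin N => D (i:ℕ)) P := by
    have hmono : Monotone (fun j : Fin (N+1) => ((j:ℕ):ℝ) * T / N) := by
      intro a b hab
      have : ((a:ℕ):ℝ) ≤ ((b:ℕ):ℝ) := by exact_mod_cast (Fin.le_def.mp hab)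
      apply div_le_div_of_nonneg_right _ hNpos.le
      nlinarith
    have hmem : ∀ j : Fin (N+1), ((j:ℕ):ℝ) * T / N ∈ Set.Icc (0:ℝ) T := by
      intro j
      exact htime j (Nat.lt_succ_iff.mp j.isLt)
    have h := hW.2.2.2.2 N (fun j : Fin (N+1) => ((j:ℕ):ℝ) * T / N) hmono hmem
    have hfun : (fun (i : Fin N) => fun ω =>
        W ((((i.succ : Fin (N+1)):ℕ):ℝ) * T / N) ω - W ((((i.castSucc : Fin (N+1)):ℕ):ℝ) * T / N) ω)
        = fun i : Fin N => D (i:ℕ) := by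
      funext i ω
      rw [hD_def]
      simp only [Fin.val_succ, Fin.coe_castSucc]
      push_cast
      ring_nf
    rw [hfun] at h
    exact h
  set 𝒢 : ℕ → MeasurableSpace Ω :=
    fun k => ⨆ i ∈ {i : Fin N | (i:ℕ) < k}, MeasurableSpace.comap (D (i:ℕ)) inferInstance with h𝒢
  have h_le : ∀ i : Fin N, MeasurableSpace.comap (D (i:ℕ)) inferInstance ≤ _ :=
    fun i => (hDmeas i i.isLt).comap_le
  have hG_le : ∀ k, 𝒢 k ≤ ‹MeasurableSpace Ω› := by
    intro k
    exact iSup₂_le fun i _ => h_le i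
  have hGmono : ∀ k, 𝒢 k ≤ 𝒢 (k+1) := by
    intro k
    exact iSup₂_le fun i hi => le_iSup₂ (f := fun (i : Fin N) (_ : i ∈ {i : Fin N | (i:ℕ) < k+1}) =>
      MeasurableSpace.comap (D (i:ℕ)) inferInstance) i (Nat.lt_succ_of_lt hi)
  have hYG : ∀ k, k ≤ N → Measurable[𝒢 k] (Y N k) := by
    intro k
    induction k with
    | zero =>
      intro _
      have : Y N 0 = fun _ => x₀ := funext (hY0 N hN1)
      rw [this]
      exact measurable_const
    | succ k ih =>
      intro hk1
      have hk : k < N := hk1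
      have ihk : Measurable[𝒢 (k+1)] (Y N k) := (ih hk.le).mono (hGmono k) le_rfl
      have hDG : Measurable[𝒢 (k+1)] (D k) := by
        have hle : MeasurableSpace.comap (D k) inferInstance ≤ 𝒢 (k+1) := by
          have := le_iSup₂ (f := fun (i : Fin N) (_ : i ∈ {i : Fin N | (i:ℕ) < k+1}) =>
            MeasurableSpace.comap (D (i:ℕ)) inferInstance) (⟨k, hk⟩ : Fin N)
            (Nat.lt_succ_self k)
          exact this
        exact Measurable.of_comap_le hle
      have heq : Y N (k+1) = fun ω => Y N k ω + σ * Y N k ω * (1 - Y N k ω) * D k ω :=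
        funext (hYrec N hN1 k hk)
      rw [heq]
      exact ihk.add (((measurable_const.mul ihk).mul (measurable_const.sub ihk)).mul hDG)
  have hYm : ∀ k, k ≤ N → Measurable (Y N k) := fun k hk => (hYG k hk).mono (hG_le k) le_rfl
  have hindep : ∀ k, k < N → IndepFun (Y N k) (D k) P := by
    intro k hk
    have hdisj : Disjoint {i : Fin N | (i:ℕ) < k} ({⟨k, hk⟩} : Set (Fin N)) := by
      rw [Set.disjoint_singleton_right]
      simp
    have hI := indep_iSup_of_disjoint
      (m := fun i : Fin N => MeasurableSpace.comap (D (i:ℕ)) inferInstance)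
      h_le hiid hdisj
    have hsingle : (⨆ i ∈ ({⟨k, hk⟩} : Set (Fin N)), MeasurableSpace.comap (D (i:ℕ)) inferInstance)
        = MeasurableSpace.comap (D k) inferInstance := by
      simp
    rw [hsingle] at hI
    exact indep_of_indep_of_le_left hI ((hYG k hk.le).comap_le)
  have hρpos : (0:ℝ) < ρ := lt_of_lt_of_le (by norm_num) hρ2
  have hv960 : (960:ℝ) ≤ ρ * σ^2 * v := by
    rw [div_le_iff₀ (by positivity)] at hρ1
    rw [hvR, show ρ * σ^2 * (T/N) = ρ * (σ^2 * T) / N by ring, le_div_iff₀ hNpos]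
    linarith
  -- The main inductive step
  have step : ∀ k, k < N → ∀ q : ℕ, 1 ≤ q →
      ENNReal.ofReal (ρ^(2*q)) ≤ ∫⁻ ω, ENNReal.ofReal ((Y N k ω)^(2*(2*q))) ∂P →
      ENNReal.ofReal (ρ^q) ≤ ∫⁻ ω, ENNReal.ofReal ((Y N (k+1) ω)^(2*q)) ∂P := by
    intro k hk q hq hA4
    set g : ℝ → ℝ := fun x => x^(2*q) with hg_def
    have hgm : Measurable g := measurable_id.pow_const _
    have hnn : ∀ x, 0 ≤ g x := by
      intro x
      show (0:ℝ) ≤ x^(2*q)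
      rw [pow_mul]
      positivity
    have heven : ∀ x, g (-x) = g x := fun x => Even.neg_pow (even_two_mul q) x
    have hmono : ∀ a b : ℝ, 0 ≤ a → a ≤ b → g a ≤ g b :=
      fun a b ha hab => pow_le_pow_left₀ ha hab _
    have hmul : ∀ a b : ℝ, g (a*b) = g a * g b := fun a b => mul_pow a b _
    have hcore := step_core P (Y N k) (D k) σ v (hYm k hk.le) (hDmeas k hk) (hDlaw k hk)
      (hindep k hk) hgm hnn heven hmono hmul
    have hre : ∫⁻ ω, ENNReal.ofReal (g (Y N k ω + σ * Y N k ω * (1 - Y N k ω) * D k ω)) ∂P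
        = ∫⁻ ω, ENNReal.ofReal ((Y N (k+1) ω)^(2*q)) ∂P := by
      apply lintegral_congr
      intro ω
      rw [hYrec N hN1 k hk ω]
    rw [hre] at hcore
    set M : ℝ≥0∞ := ∫⁻ x, ENNReal.ofReal (g x) ∂(gaussianReal 0 v) with hM_def
    have hM : ENNReal.ofReal (((q:ℝ) * v / 60)^q) ≤ M := gauss_even_moment hv hq
    set B : ℝ≥0∞ := ∫⁻ ω, ENNReal.ofReal (g (σ * Y N k ω * (1 - Y N k ω))) ∂P with hB_def
    set c : ℝ := (4/σ^2)^q with hc_def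
    have hc0 : (0:ℝ) < c := by rw [hc_def]; positivity
    have hYk : Measurable (Y N k) := hYm k hk.le
    have hBmeas : Measurable (fun ω => ENNReal.ofReal (g (σ * Y N k ω * (1 - Y N k ω)))) :=
      (hgm.comp (((measurable_const.mul hYk).mul (measurable_const.sub hYk)))).ennreal_ofReal
    have hB : ENNReal.ofReal (ρ^(2*q)/2) ≤ ENNReal.ofReal c * B := by
      have hpt : ∀ ω, ENNReal.ofReal ((Y N k ω)^(2*(2*q)))
          ≤ ENNReal.ofReal c * ENNReal.ofReal (g (σ * Y N k ω * (1 - Y N k ω)))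
            + ENNReal.ofReal ((64:ℝ)^q) := by
        intro ω
        rw [← ENNReal.ofReal_mul hc0.le, ← ENNReal.ofReal_add (mul_nonneg hc0.le (hnn _)) (by positivity)]
        exact ENNReal.ofReal_le_ofReal (poly1σ hσ (Y N k ω) q)
      have hint : ENNReal.ofReal (ρ^(2*q)) ≤ ENNReal.ofReal c * B + ENNReal.ofReal ((64:ℝ)^q) := by
        refine le_trans hA4 ?_
        calc ∫⁻ ω, ENNReal.ofReal ((Y N k ω)^(2*(2*q))) ∂P
            ≤ ∫⁻ ω, (ENNReal.ofReal c * ENNReal.ofReal (g (σ * Y N k ω * (1 - Y N k ω)))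
              + ENNReal.ofReal ((64:ℝ)^q)) ∂P := lintegral_mono hpt
          _ = ENNReal.ofReal c * B + ENNReal.ofReal ((64:ℝ)^q) := by
              rw [lintegral_add_right _ measurable_const, lintegral_const, measure_univ, mul_one,
                lintegral_const_mul _ hBmeas]
      have hreal : ρ^(2*q)/2 + (64:ℝ)^q ≤ ρ^(2*q) := by
        have h144 : (144:ℝ)^q ≤ ρ^(2*q) := by
          rw [pow_mul]
          apply pow_le_pow_left₀ (by norm_num)
          nlinarith
        have h2 : 2*(64:ℝ)^q ≤ 144^q := by
          have he : (144:ℝ)^q = (2.25:ℝ)^q * 64^q := by rw [← mul_pow]; norm_num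
          have h225 : (2.25:ℝ) ≤ 2.25^q := le_self_pow₀ (by norm_num) (by omega)
          nlinarith [pow_pos (show (0:ℝ) < 64 by norm_num) q]
        linarith
      have hcomb : ENNReal.ofReal (ρ^(2*q)/2) + ENNReal.ofReal ((64:ℝ)^q)
          ≤ ENNReal.ofReal c * B + ENNReal.ofReal ((64:ℝ)^q) := by
        refine le_trans ?_ hint
        rw [← ENNReal.ofReal_add (by positivity) (by positivity)]
        exact ENNReal.ofReal_le_ofReal hreal
      exact (ENNReal.add_le_add_iff_right ENNReal.ofReal_ne_top).mp hcomb
    have hchain : ENNReal.ofReal (ρ^(2*q)/2) * M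
        ≤ ENNReal.ofReal c * (2 * ∫⁻ ω, ENNReal.ofReal ((Y N (k+1) ω)^(2*q)) ∂P) := by
      calc ENNReal.ofReal (ρ^(2*q)/2) * M ≤ (ENNReal.ofReal c * B) * M := mul_le_mul_left hB M
        _ = ENNReal.ofReal c * (B * M) := mul_assoc _ _ _
        _ ≤ _ := mul_le_mul_right hcore _
    have hρq : (0:ℝ) < ρ^q := by positivity
    have hx : (4:ℝ) ≤ ρ*(q:ℝ)*v*σ^2/240 := by
      have hq1 : (1:ℝ) ≤ (q:ℝ) := by exact_mod_cast hq
      rw [le_div_iff₀ (by norm_num)]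
      nlinarith [NNReal.coe_nonneg v, sq_nonneg σ]
    have hxq : (4:ℝ) ≤ (ρ*(q:ℝ)*v*σ^2/240)^q := by
      calc (4:ℝ) ≤ 4^q := le_self_pow₀ (by norm_num) (by omega)
        _ ≤ (ρ*(q:ℝ)*v*σ^2/240)^q := pow_le_pow_left₀ (by norm_num) hx q
    have hreal2 : 2 * c * ρ^q ≤ ρ^(2*q)/2 * (((q:ℝ) * v / 60)^q) := by
      have ebase : ρ*((q:ℝ)*v/60) = (ρ*(q:ℝ)*v*σ^2/240) * (4/σ^2) := by
        field_simp
        ring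
      have e3 : (ρ*((q:ℝ)*v/60))^q = (ρ*(q:ℝ)*v*σ^2/240)^q * c := by
        rw [hc_def, ← mul_pow, ← ebase]
      have eR : ρ^(2*q)/2 * (((q:ℝ)*v/60)^q)
          = ρ^q * ((ρ*(q:ℝ)*v*σ^2/240)^q * c) / 2 := by
        rw [← e3, two_mul, pow_add, mul_pow]
        ring
      rw [eR]
      nlinarith [mul_nonneg (mul_nonneg hc0.le hρq.le) (sub_nonneg.mpr hxq)]
    have hfinal : ENNReal.ofReal (2*c) * ENNReal.ofReal (ρ^q)
        ≤ ENNReal.ofReal (2*c) * ∫⁻ ω, ENNReal.ofReal ((Y N (k+1) ω)^(2*q)) ∂P := by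
      calc ENNReal.ofReal (2*c) * ENNReal.ofReal (ρ^q)
          = ENNReal.ofReal (2*c*ρ^q) := by
            rw [← ENNReal.ofReal_mul (by positivity)]
        _ ≤ ENNReal.ofReal (ρ^(2*q)/2 * (((q:ℝ) * v / 60)^q)) := ENNReal.ofReal_le_ofReal hreal2
        _ = ENNReal.ofReal (ρ^(2*q)/2) * ENNReal.ofReal (((q:ℝ) * v / 60)^q) := by
            rw [← ENNReal.ofReal_mul (by positivity)]
        _ ≤ ENNReal.ofReal (ρ^(2*q)/2) * M := mul_le_mul_right hM _
        _ ≤ ENNReal.ofReal c * (2 * ∫⁻ ω, ENNReal.ofReal ((Y N (k+1) ω)^(2*q)) ∂P) := hchain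
        _ = ENNReal.ofReal (2*c) * ∫⁻ ω, ENNReal.ofReal ((Y N (k+1) ω)^(2*q)) ∂P := by
            rw [ENNReal.ofReal_mul (by norm_num), ENNReal.ofReal_ofNat, ← mul_assoc, mul_comm (ENNReal.ofReal c) 2]
    exact (ENNReal.mul_le_mul_iff_right (ne_of_gt (ENNReal.ofReal_pos.mpr (by positivity)))
      ENNReal.ofReal_ne_top).mp hfinal
  -- Base case : k = 1 with q = 2^(N-2)
  have base : ENNReal.ofReal (ρ^(2^(N-2))) ≤ ∫⁻ ω, ENNReal.ofReal ((Y N 1 ω)^(2*2^(N-2))) ∂P := by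
    set q : ℕ := 2^(N-2) with hq_def
    have hq : 1 ≤ q := Nat.one_le_two_pow
    set g : ℝ → ℝ := fun x => x^(2*q) with hg_def
    have hgm : Measurable g := measurable_id.pow_const _
    have hnn : ∀ x, 0 ≤ g x := by
      intro x
      show (0:ℝ) ≤ x^(2*q)
      rw [pow_mul]
      positivity
    have heven : ∀ x, g (-x) = g x := fun x => Even.neg_pow (even_two_mul q) x
    have hmono : ∀ a b : ℝ, 0 ≤ a → a ≤ b → g a ≤ g b :=
      fun a b ha hab => pow_le_pow_left₀ ha hab _
    have hmul : ∀ a b : ℝ, g (a*b) = g a * g b := fun a b => mul_pow a b _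
    have h0N : 0 < N := by omega
    have hcore := step_core P (Y N 0) (D 0) σ v (hYm 0 (by omega)) (hDmeas 0 h0N) (hDlaw 0 h0N)
      (hindep 0 h0N) hgm hnn heven hmono hmul
    have hre : ∫⁻ ω, ENNReal.ofReal (g (Y N 0 ω + σ * Y N 0 ω * (1 - Y N 0 ω) * D 0 ω)) ∂P
        = ∫⁻ ω, ENNReal.ofReal ((Y N 1 ω)^(2*q)) ∂P := by
      apply lintegral_congr
      intro ω
      simp only [hD_def]
      rw [← hYrec N hN1 0 h0N ω]
    rw [hre] at hcore
    have hconst : ∫⁻ ω, ENNReal.ofReal (g (σ * Y N 0 ω * (1 - Y N 0 ω))) ∂P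
        = ENNReal.ofReal (g (σ * x₀ * (1 - x₀))) := by
      have : (fun ω => ENNReal.ofReal (g (σ * Y N 0 ω * (1 - Y N 0 ω))))
          = fun _ => ENNReal.ofReal (g (σ * x₀ * (1 - x₀))) := by
        funext ω
        rw [hY0 N hN1 ω]
      rw [this, lintegral_const, measure_univ, mul_one]
    rw [hconst] at hcore
    have hM : ENNReal.ofReal (((q:ℝ) * v / 60)^q)
        ≤ ∫⁻ x, ENNReal.ofReal (g x) ∂(gaussianReal 0 v) := gauss_even_moment hv hq
    have hreal : 2 * ρ^q ≤ g (σ * x₀ * (1 - x₀)) * (((q:ℝ) * v / 60)^q) := by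
      show 2 * ρ^q ≤ (σ * x₀ * (1 - x₀))^(2*q) * (((q:ℝ) * v / 60)^q)
      have e1 : (σ * x₀ * (1 - x₀))^(2*q) = ((σ * (x₀ * (1 - x₀)))^2)^q := by
        rw [← pow_mul, mul_comm 2 q, pow_mul]
        ring_nf
      have e2 : ((σ * (x₀ * (1 - x₀)))^2)^q * (((q:ℝ) * v / 60)^q)
          = ((σ * (x₀ * (1 - x₀)))^2 * ((q:ℝ) * v / 60))^q := by rw [← mul_pow]
      rw [e1, e2]
      have hqv : (q:ℝ) * v = 2^(N-2) * (T/N) := by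
        rw [hvR, hq_def]
        push_cast
        ring
      have hbig : 2 * ρ ≤ (σ * (x₀ * (1 - x₀)))^2 * ((q:ℝ) * v / 60) := by
        rw [hqv]
        calc 2 * ρ ≤ (σ * (x₀ * (1 - x₀)))^2 * (2^(N-2) * (T/N)) / 60 := hbase
          _ = (σ * (x₀ * (1 - x₀)))^2 * (2^(N-2) * (T/N) / 60) := by ring
      calc 2 * ρ^q ≤ (2*ρ)^q := by
            have h2q : (2:ℝ)^q * ρ^q = (2*ρ)^q := (mul_pow 2 ρ q).symm
            have h22 : (2:ℝ) ≤ 2^q := le_self_pow₀ (by norm_num) (by omega)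
            nlinarith [pow_pos hρpos q]
        _ ≤ ((σ * (x₀ * (1 - x₀)))^2 * ((q:ℝ) * v / 60))^q := by
            apply pow_le_pow_left₀ (by positivity) hbig
    have hchain : ENNReal.ofReal (2 * ρ^q)
        ≤ 2 * ∫⁻ ω, ENNReal.ofReal ((Y N 1 ω)^(2*q)) ∂P := by
      calc ENNReal.ofReal (2 * ρ^q)
          ≤ ENNReal.ofReal (g (σ * x₀ * (1 - x₀)) * (((q:ℝ) * v / 60)^q)) :=
            ENNReal.ofReal_le_ofReal hreal
        _ = ENNReal.ofReal (g (σ * x₀ * (1 - x₀))) * ENNReal.ofReal (((q:ℝ) * v / 60)^q) :=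
            ENNReal.ofReal_mul (hnn _)
        _ ≤ ENNReal.ofReal (g (σ * x₀ * (1 - x₀))) * ∫⁻ x, ENNReal.ofReal (g x) ∂(gaussianReal 0 v) :=
            mul_le_mul_right hM _
        _ ≤ _ := hcore
    have : (2:ℝ≥0∞) * ENNReal.ofReal (ρ^q) ≤ 2 * ∫⁻ ω, ENNReal.ofReal ((Y N 1 ω)^(2*q)) ∂P := by
      rw [show (2:ℝ≥0∞) * ENNReal.ofReal (ρ^q) = ENNReal.ofReal (2 * ρ^q) by
        rw [ENNReal.ofReal_mul (by norm_num), ENNReal.ofReal_ofNat]]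
      exact hchain
    exact (ENNReal.mul_le_mul_iff_right (by norm_num) (by norm_num)).mp this
  -- Induction
  have inv : ∀ j, j ≤ N-2 →
      ENNReal.ofReal (ρ^(2^(N-2-j))) ≤ ∫⁻ ω, ENNReal.ofReal ((Y N (1+j) ω)^(2*2^(N-2-j))) ∂P := by
    intro j
    induction j with
    | zero => intro _; exact base
    | succ j ih =>
      intro hj
      have ihj := ih (by omega)
      have h2 : 2*2^(N-2-(j+1)) = 2^(N-2-j) := by
        rw [show N-2-j = (N-2-(j+1)) + 1 by omega, pow_succ]
        ring
      have hstep := step (1+j) (by omega) (2^(N-2-(j+1))) Nat.one_le_two_pow (by rw [h2]; exact ihj)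
      rw [show 1+(j+1) = (1+j)+1 by omega]
      exact hstep
  have invTop : ENNReal.ofReal ρ ≤ ∫⁻ ω, ENNReal.ofReal ((Y N (N-1) ω)^2) ∂P := by
    have h := inv (N-2) le_rfl
    rw [show N-2-(N-2) = 0 by omega, show 1+(N-2) = N-1 by omega] at h
    norm_num at h
    exact h
  -- Top step with g = |.|^p
  have hp0 : (0:ℝ) ≤ p := le_trans zero_le_one hp
  set g : ℝ → ℝ := fun x => |x|^p with hg_def
  have hgm : Measurable g := (Real.continuous_rpow_const hp0).measurable.comp measurable_abs
  have hnn : ∀ x, 0 ≤ g x := fun x => Real.rpow_nonneg (abs_nonneg x) p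
  have heven : ∀ x, g (-x) = g x := by
    intro x
    show |(-x)|^p = |x|^p
    rw [abs_neg]
  have hmono : ∀ a b : ℝ, 0 ≤ a → a ≤ b → g a ≤ g b := by
    intro a b ha hab
    show |a|^p ≤ |b|^p
    rw [abs_of_nonneg ha, abs_of_nonneg (le_trans ha hab)]
    exact Real.rpow_le_rpow ha hab hp0
  have hmul : ∀ a b : ℝ, g (a*b) = g a * g b := by
    intro a b
    show |a*b|^p = |a|^p * |b|^p
    rw [abs_mul, Real.mul_rpow (abs_nonneg a) (abs_nonneg b)]
  have hN1N : N - 1 < N := by omega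
  have hcore := step_core P (Y N (N-1)) (D (N-1)) σ v (hYm (N-1) hN1N.le) (hDmeas (N-1) hN1N)
    (hDlaw (N-1) hN1N) (hindep (N-1) hN1N) hgm hnn heven hmono hmul
  have hre : ∫⁻ ω, ENNReal.ofReal (g (Y N (N-1) ω + σ * Y N (N-1) ω * (1 - Y N (N-1) ω) * D (N-1) ω)) ∂P
      = ∫⁻ ω, ENNReal.ofReal (|Y N N ω|^p) ∂P := by
    apply lintegral_congr
    intro ω
    simp only [hD_def]
    rw [← hYrec N hN1 (N-1) hN1N ω, show (N-1)+1 = N by omega]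
  rw [hre] at hcore
  set S : ℝ≥0∞ := ∫⁻ ω, ENNReal.ofReal (|Y N N ω|^p) ∂P with hS_def
  set Bp : ℝ≥0∞ := ∫⁻ ω, ENNReal.ofReal (g (σ * Y N (N-1) ω * (1 - Y N (N-1) ω))) ∂P with hBp_def
  set c : ℝ := (2/σ)^p with hc_def
  have hc0 : (0:ℝ) < c := by rw [hc_def]; positivity
  have hYk : Measurable (Y N (N-1)) := hYm (N-1) hN1N.le
  have hBmeas : Measurable (fun ω => ENNReal.ofReal (g (σ * Y N (N-1) ω * (1 - Y N (N-1) ω)))) :=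
    (hgm.comp (((measurable_const.mul hYk).mul (measurable_const.sub hYk)))).ennreal_ofReal
  have hBp : ENNReal.ofReal (ρ/2) ≤ ENNReal.ofReal c * Bp := by
    have hpt : ∀ ω, ENNReal.ofReal ((Y N (N-1) ω)^2)
        ≤ ENNReal.ofReal c * ENNReal.ofReal (g (σ * Y N (N-1) ω * (1 - Y N (N-1) ω)))
          + ENNReal.ofReal ((8:ℝ)^p) := by
      intro ω
      rw [← ENNReal.ofReal_mul hc0.le, ← ENNReal.ofReal_add (mul_nonneg hc0.le (hnn _)) (by positivity)]
      exact ENNReal.ofReal_le_ofReal (poly2σ hσ (Y N (N-1) ω) hp)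
    have hint : ENNReal.ofReal ρ ≤ ENNReal.ofReal c * Bp + ENNReal.ofReal ((8:ℝ)^p) := by
      refine le_trans invTop ?_
      calc ∫⁻ ω, ENNReal.ofReal ((Y N (N-1) ω)^2) ∂P
          ≤ ∫⁻ ω, (ENNReal.ofReal c * ENNReal.ofReal (g (σ * Y N (N-1) ω * (1 - Y N (N-1) ω)))
            + ENNReal.ofReal ((8:ℝ)^p)) ∂P := lintegral_mono hpt
        _ = ENNReal.ofReal c * Bp + ENNReal.ofReal ((8:ℝ)^p) := by
            rw [lintegral_add_right _ measurable_const, lintegral_const, measure_univ, mul_one,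
              lintegral_const_mul _ hBmeas]
    have hcomb : ENNReal.ofReal (ρ/2) + ENNReal.ofReal ((8:ℝ)^p)
        ≤ ENNReal.ofReal c * Bp + ENNReal.ofReal ((8:ℝ)^p) := by
      refine le_trans ?_ hint
      rw [← ENNReal.ofReal_add (by positivity) (by positivity)]
      apply ENNReal.ofReal_le_ofReal
      linarith
    exact (ENNReal.add_le_add_iff_right ENNReal.ofReal_ne_top).mp hcomb
  have hMp : ENNReal.ofReal (Real.sqrt v ^ p / 60)
      ≤ ∫⁻ x, ENNReal.ofReal (g x) ∂(gaussianReal 0 v) := gauss_abs_moment hv hp0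
  have hchain : ENNReal.ofReal (ρ/2) * ENNReal.ofReal (Real.sqrt v ^ p / 60)
      ≤ ENNReal.ofReal c * (2 * S) := by
    calc ENNReal.ofReal (ρ/2) * ENNReal.ofReal (Real.sqrt v ^ p / 60)
        ≤ (ENNReal.ofReal c * Bp) * ENNReal.ofReal (Real.sqrt v ^ p / 60) :=
          mul_le_mul_left hBp _
      _ ≤ (ENNReal.ofReal c * Bp) * ∫⁻ x, ENNReal.ofReal (g x) ∂(gaussianReal 0 v) :=
          mul_le_mul_right hMp _
      _ = ENNReal.ofReal c * (Bp * ∫⁻ x, ENNReal.ofReal (g x) ∂(gaussianReal 0 v)) :=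
          mul_assoc _ _ _
      _ ≤ _ := mul_le_mul_right hcore _
  have hrealt : 2 * c * (σ^p * ρ * Real.sqrt (T/N) ^ p / (240 * 2^p)) = ρ/2 * (Real.sqrt v ^ p / 60) := by
    have hcs : c * σ^p = 2^p := by
      rw [hc_def, ← Real.mul_rpow (by positivity) hσ.le]
      rw [div_mul_cancel₀ 2 (ne_of_gt hσ)]
    have h2p : (0:ℝ) < (2:ℝ)^p := Real.rpow_pos_of_pos (by norm_num) p
    rw [hvR]
    rw [show 2*c*(σ^p * ρ * Real.sqrt (T/(N:ℝ)) ^ p/(240*2^p))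
      = (c*σ^p)*(ρ*Real.sqrt (T/(N:ℝ)) ^ p)/(120*2^p) by ring, hcs]
    rw [mul_comm ((2:ℝ)^p), mul_div_assoc]
    rw [show (2:ℝ)^p/(120*2^p) = 1/120 by
      rw [div_eq_div_iff (by positivity) (by norm_num)]
      ring]
    ring
  have hfinal : ENNReal.ofReal (2*c) * ENNReal.ofReal (σ^p * ρ * Real.sqrt (T/N) ^ p / (240 * 2^p))
      ≤ ENNReal.ofReal (2*c) * S := by
    calc ENNReal.ofReal (2*c) * ENNReal.ofReal (σ^p * ρ * Real.sqrt (T/N) ^ p / (240 * 2^p))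
        = ENNReal.ofReal (2 * c * (σ^p * ρ * Real.sqrt (T/N) ^ p / (240 * 2^p))) := by
          rw [← ENNReal.ofReal_mul (by positivity)]
      _ = ENNReal.ofReal (ρ/2 * (Real.sqrt v ^ p / 60)) := by rw [hrealt]
      _ = ENNReal.ofReal (ρ/2) * ENNReal.ofReal (Real.sqrt v ^ p / 60) :=
          ENNReal.ofReal_mul (by positivity)
      _ ≤ ENNReal.ofReal c * (2 * S) := hchain
      _ = ENNReal.ofReal (2*c) * S := by
          rw [ENNReal.ofReal_mul (by norm_num), ENNReal.ofReal_ofNat, ← mul_assoc,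
            mul_comm (ENNReal.ofReal c) 2]
  exact (ENNReal.mul_le_mul_iff_right (ne_of_gt (ENNReal.ofReal_pos.mpr (by positivity)))
    ENNReal.ofReal_ne_top).mp hfinal

lemma ev_poly (b : ℝ) (m : ℕ) : ∀ᶠ N : ℕ in atTop, b * (N:ℝ)^m ≤ 2^N := by
  have hL : (0:ℝ) < Real.log 2 := Real.log_pos one_lt_two
  have h3 : Tendsto (fun x : ℝ => Real.exp (x * Real.log 2) / (x * Real.log 2)^m) atTop atTop :=
    (Real.tendsto_exp_div_pow_atTop m).comp (tendsto_id.atTop_mul_const hL)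
  have h4 : Tendsto (fun N : ℕ => Real.exp ((N:ℝ) * Real.log 2) / ((N:ℝ) * Real.log 2)^m)
      atTop atTop := h3.comp tendsto_natCast_atTop_atTop
  have h5 : Tendsto (fun N : ℕ => Real.exp ((N:ℝ) * Real.log 2) / ((N:ℝ) * Real.log 2)^m
      * (Real.log 2)^m) atTop atTop := h4.atTop_mul_const (by positivity)
  filter_upwards [h5.eventually_ge_atTop b, eventually_ge_atTop 1] with N hb hN1
  have hN0 : (0:ℝ) < (N:ℝ) := by exact_mod_cast Nat.lt_of_lt_of_le Nat.zero_lt_one hN1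
  have he : Real.exp ((N:ℝ) * Real.log 2) = 2^N := by
    rw [Real.exp_nat_mul, Real.exp_log (by norm_num)]
  have heq : Real.exp ((N:ℝ) * Real.log 2) / ((N:ℝ) * Real.log 2)^m * (Real.log 2)^m
      = 2^N / (N:ℝ)^m := by
    rw [he, mul_pow]
    field_simp
  rw [heq, le_div_iff₀ (by positivity)] at hb
  linarith

theorem divergence {Ω : Type*} [MeasurableSpace Ω] (P : MeasureTheory.Measure Ω)
    [MeasureTheory.IsProbabilityMeasure P]
    (T : ℝ) (hT : 0 < T)
    (σ : ℝ) (hσ : 0 < σ) (x₀ : ℝ) (hx₀ : x₀ ∈ Set.Ioo (0 : ℝ) 1)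
    (W : ℝ → Ω → ℝ) (hW : IsStandardBrownianMotion P T W)
    (Y : ℕ → ℕ → Ω → ℝ)
    (hY0 : ∀ N, 1 ≤ N → ∀ ω, Y N 0 ω = x₀)
    (hYrec : ∀ N, 1 ≤ N → ∀ k < N, ∀ ω,
      Y N (k + 1) ω = Y N k ω + σ * Y N k ω * (1 - Y N k ω) * (W (((k : ℝ) + 1) * T / N) ω - W ((k : ℝ) * T / N) ω)) :
    ∀ p : ℝ, 1 ≤ p →
      Tendsto (fun N : ℕ => ∫⁻ ω, ENNReal.ofReal (|Y N N ω| ^ p) ∂(P : MeasureTheory.Measure Ω)) atTop (nhds ⊤) := by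
  intro p hp
  have hp0 : (0:ℝ) ≤ p := le_trans zero_le_one hp
  have hx1 : 0 < x₀ := hx₀.1
  have hx2 : x₀ < 1 := hx₀.2
  have hc₀ : (0:ℝ) < (σ * (x₀ * (1 - x₀)))^2 :=
    pow_pos (mul_pos hσ (mul_pos hx1 (by linarith))) 2
  set s : ℕ := ⌈p/2⌉₊ with hs_def
  have hs : p/2 ≤ (s:ℝ) := Nat.le_ceil _
  have hs1 : 1 ≤ s := by
    rw [hs_def]
    apply Nat.one_le_ceil_iff.mpr
    linarith
  set m : ℕ := s + 1 with hm_def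
  have hm2 : 2 ≤ m := by omega
  rw [ENNReal.tendsto_nhds_top_iff_nat]
  intro n
  -- eventual facts
  have E2 : ∀ᶠ N : ℕ in atTop, 960 * (N:ℝ) / (σ^2 * T) ≤ (N:ℝ)^m := by
    filter_upwards [eventually_ge_atTop (max 1 ⌈960/(σ^2*T)⌉₊)] with N hN
    have hN1 : 1 ≤ N := le_trans (le_max_left _ _) hN
    have hN1R : (1:ℝ) ≤ (N:ℝ) := by exact_mod_cast hN1
    have hNb : 960/(σ^2*T) ≤ (N:ℝ) := by
      calc 960/(σ^2*T) ≤ (⌈960/(σ^2*T)⌉₊ : ℝ) := Nat.le_ceil _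
        _ ≤ (N:ℝ) := by exact_mod_cast le_trans (le_max_right _ _) hN
    calc 960 * (N:ℝ) / (σ^2 * T) = (960/(σ^2*T)) * N := by ring
      _ ≤ (N:ℝ) * N := by
          apply mul_le_mul_of_nonneg_right hNb (by positivity)
      _ = (N:ℝ)^2 := by ring
      _ ≤ (N:ℝ)^m := pow_le_pow_right₀ hN1R hm2
  have E3 : ∀ᶠ N : ℕ in atTop,
      2 * (N:ℝ)^m ≤ (σ * (x₀ * (1 - x₀)))^2 * (2^(N-2) * (T/N)) / 60 := by
    filter_upwards [ev_poly (480/((σ * (x₀ * (1 - x₀)))^2 * T)) (m+1),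
      eventually_ge_atTop 2] with N hN hN2
    have hNpos : (0:ℝ) < N := by
      have : (2:ℝ) ≤ (N:ℝ) := by exact_mod_cast hN2
      linarith
    have h2N : (2:ℝ)^N = 2^(N-2) * 4 := by
      rw [show N = (N-2)+2 by omega, pow_add]
      norm_num
    rw [h2N] at hN
    rw [div_mul_eq_mul_div, div_le_iff₀ (mul_pos hc₀ hT)] at hN
    rw [le_div_iff₀ (by norm_num)]
    rw [show (σ * (x₀ * (1 - x₀)))^2 * (2^(N-2) * (T/(N:ℝ)))
      = (σ * (x₀ * (1 - x₀)))^2 * T * 2^(N-2) / N by ring, le_div_iff₀ hNpos]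
    calc 2 * (N:ℝ)^m * 60 * N = 120 * ((N:ℝ)^m * N) := by ring
      _ = 120 * (N:ℝ)^(m+1) := by rw [show m+1 = s+2 by omega, show m = s+1 from rfl]; ring
      _ ≤ (σ * (x₀ * (1 - x₀)))^2 * T * (2^(N-2) * 4) / 4 := by
          calc 120 * (N:ℝ)^(m+1) = 480 * (N:ℝ)^(m+1) / 4 := by ring
            _ ≤ (σ * (x₀ * (1 - x₀)))^2 * T * (2^(N-2) * 4) / 4 := by
                apply div_le_div_of_nonneg_right _ (by norm_num)
                linarith [hN]
      _ = (σ * (x₀ * (1 - x₀)))^2 * T * 2^(N-2) := by ring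
  have E4 : ∀ᶠ N : ℕ in atTop, 2 * (8:ℝ)^p ≤ (N:ℝ)^m := by
    filter_upwards [eventually_ge_atTop (max 1 ⌈2*(8:ℝ)^p⌉₊)] with N hN
    have hN1 : (1:ℝ) ≤ (N:ℝ) := by exact_mod_cast le_trans (le_max_left _ _) hN
    calc 2 * (8:ℝ)^p ≤ (⌈2*(8:ℝ)^p⌉₊ : ℝ) := Nat.le_ceil _
      _ ≤ (N:ℝ) := by exact_mod_cast le_trans (le_max_right _ _) hN
      _ = (N:ℝ)^1 := (pow_one _).symm
      _ ≤ (N:ℝ)^m := pow_le_pow_right₀ hN1 (by omega)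
  have E5 : ∀ᶠ N : ℕ in atTop,
      (n:ℝ) < σ^p * (N:ℝ)^m * Real.sqrt (T/N) ^ p / (240 * 2^p) := by
    set κ : ℝ := σ^p * T^s / (240 * 2^p) with hκ_def
    have hκ : 0 < κ := by
      rw [hκ_def]
      have := Real.rpow_pos_of_pos hσ p
      have := Real.rpow_pos_of_pos (show (0:ℝ) < 2 by norm_num) p
      positivity
    filter_upwards [eventually_ge_atTop (max 1 (max ⌈T⌉₊ ⌈((n:ℝ)+1)/κ⌉₊))] with N hN
    have hN1 : (1:ℝ) ≤ (N:ℝ) := by exact_mod_cast le_trans (le_max_left _ _) hN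
    have hNpos : (0:ℝ) < N := by linarith
    have hTN : (0:ℝ) < T/N := div_pos hT hNpos
    have hTN1 : T/N ≤ 1 := by
      rw [div_le_one hNpos]
      calc T ≤ (⌈T⌉₊:ℝ) := Nat.le_ceil _
        _ ≤ (N:ℝ) := by
            exact_mod_cast le_trans (le_trans (le_max_left _ _) (le_max_right _ _)) hN
    have hNκ : ((n:ℝ)+1)/κ ≤ (N:ℝ) := by
      calc ((n:ℝ)+1)/κ ≤ (⌈((n:ℝ)+1)/κ⌉₊:ℝ) := Nat.le_ceil _
        _ ≤ (N:ℝ) := by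
            exact_mod_cast le_trans (le_trans (le_max_right _ _) (le_max_right _ _)) hN
    have hsqrt : Real.sqrt (T/N) ^ p = (T/(N:ℝ)) ^ (p/2 : ℝ) := by
      rw [Real.sqrt_eq_rpow, ← Real.rpow_mul hTN.le]
      congr 1
      ring
    have hlow : κ * N ≤ σ^p * (N:ℝ)^m * Real.sqrt (T/N) ^ p / (240 * 2^p) := by
      rw [hsqrt]
      have h1 : (T/(N:ℝ))^((s:ℕ):ℝ) ≤ (T/(N:ℝ))^(p/2:ℝ) :=
        Real.rpow_le_rpow_of_exponent_ge hTN hTN1 hs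
      rw [Real.rpow_natCast] at h1
      have hNs : ((N:ℝ))^s ≠ 0 := by positivity
      have h2 : (N:ℝ)^m * (T/(N:ℝ))^s = T^s * N := by
        rw [show m = s+1 from rfl, pow_succ, div_pow]
        field_simp
      have hσp : (0:ℝ) ≤ σ^p := (Real.rpow_pos_of_pos hσ p).le
      have h2p : (0:ℝ) < (2:ℝ)^p := Real.rpow_pos_of_pos (by norm_num) p
      calc κ*N = σ^p * ((N:ℝ)^m * (T/(N:ℝ))^s) / (240*2^p) := by
            rw [h2, hκ_def]; ring
        _ ≤ σ^p * ((N:ℝ)^m * (T/(N:ℝ))^(p/2:ℝ)) / (240*2^p) := by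
            apply div_le_div_of_nonneg_right _ (by positivity)
            apply mul_le_mul_of_nonneg_left _ hσp
            exact mul_le_mul_of_nonneg_left h1 (by positivity)
        _ = σ^p * (N:ℝ)^m * (T/(N:ℝ))^(p/2:ℝ) / (240*2^p) := by ring
    calc (n:ℝ) < (n:ℝ)+1 := by linarith
      _ = ((n:ℝ)+1)/κ * κ := by field_simp
      _ ≤ (N:ℝ)*κ := mul_le_mul_of_nonneg_right hNκ hκ.le
      _ = κ*(N:ℝ) := mul_comm _ _
      _ ≤ _ := hlow
  filter_upwards [eventually_ge_atTop 16, E2, E3, E4, E5] with N h16 e2 e3 e4 e5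
  have h16R : (16:ℝ) ≤ (N:ℝ) := by exact_mod_cast h16
  have h12 : (12:ℝ) ≤ (N:ℝ)^m := by
    calc (12:ℝ) ≤ (N:ℝ) := by linarith
      _ = (N:ℝ)^1 := (pow_one _).symm
      _ ≤ (N:ℝ)^m := pow_le_pow_right₀ (by linarith) (by omega)
  have hkey := key P T hT σ hσ x₀ hx₀ W hW Y hY0 hYrec p hp N h16 ((N:ℝ)^m) e2 h12 e3 e4
  refine lt_of_lt_of_le ?_ hkey
  rw [show ((n:ℕ):ℝ≥0∞) = ENNReal.ofReal ((n:ℕ):ℝ) by rw [ENNReal.ofReal_natCast]]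
  exact (ENNReal.ofReal_lt_ofReal_iff (lt_of_le_of_lt (Nat.cast_nonneg n) e5)).mpr e5

end SB19

theorem stmt_19 {Ω : Type*} [MeasurableSpace Ω] (P : MeasureTheory.Measure Ω)
    [MeasureTheory.IsProbabilityMeasure P]
    (T : ℝ) (hT : 0 < T)
    (σ : ℝ) (hσ : 0 < σ) (x₀ : ℝ) (hx₀ : x₀ ∈ Set.Ioo (0 : ℝ) 1)
    (W : ℝ → Ω → ℝ) (hW : IsStandardBrownianMotion P T W)
    (Y : ℕ → ℕ → Ω → ℝ)
    (hY0 : ∀ N, 1 ≤ N → ∀ ω, Y N 0 ω = x₀)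
    (hYrec : ∀ N, 1 ≤ N → ∀ k < N, ∀ ω,
      Y N (k + 1) ω = Y N k ω + σ * Y N k ω * (1 - Y N k ω) * (W (((k : ℝ) + 1) * T / N) ω - W ((k : ℝ) * T / N) ω)) :
    ∀ p : ℝ, 1 ≤ p →
      Tendsto (fun N : ℕ => ∫⁻ ω, ENNReal.ofReal (|Y N N ω| ^ p) ∂(P : MeasureTheory.Measure Ω)) atTop (nhds ⊤) := by
  exact SB19.divergence P T hT σ hσ x₀ hx₀ W hW Y hY0 hYrec
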